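/- Let X be a type. Let w : FreeMagma X → FreeSemigroup X be the magma homomorphism extending x ↦ of x (FreeSemigroup X viewed as a magma), let P : FreeMagma X → FreeMagma PUnit be FreeMagma.map of the constant map X → PUnit, and let w_0 : FreeMagma PUnit → FreeSemigroup PUnit be the analogous magma homomorphism for PUnit. Then for every s ∈ FreeSemigroup X and every p ∈ FreeMagma PUnit such that FreeSemigroup.map (fun _ => PUnit.unit) s = w_0(p), there exists a unique m ∈ FreeMagma X with w(m) = s and P(m) = p. (In other words, the commuting square formed by w, P, w_0 and FreeSemigroup.map is Cartesian: the free magma on X is the fibered product of the free semigroup on X and the free magma on one generator over the free semigroup on one generator.) -/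

import Mathlib

namespace FMFP

variable {X : Type*}

/-- The underlying list of a free semigroup element. -/
def toL (s : FreeSemigroup X) : List X := s.head :: s.tail

lemma toL_mul (a b : FreeSemigroup X) : toL (a * b) = toL a ++ toL b := rfl

lemma toL_inj {a b : FreeSemigroup X} (h : toL a = toL b) : a = b := by
  cases a; cases b; simpa [toL] using h

lemma toL_map {Y : Type*} (f : X → Y) (s : FreeSemigroup X) :
    toL (FreeSemigroup.map f s) = (toL s).map f := by
  induction s using FreeSemigroup.recOnMul with
  | ih1 x => rfl
  | ih2 a b iha ihb => rw [map_mul, toL_mul, toL_mul, List.map_append, iha, ihb]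

lemma toL_of (x : X) : toL (FreeSemigroup.of x) = [x] := rfl

/-- Parse a list according to a parenthesization pattern, returning the
parenthesized prefix and the remainder. -/
def parse : FreeMagma PUnit → List X → Option (FreeMagma X × List X)
  | FreeMagma.of _, [] => none
  | FreeMagma.of _, x :: r => some (FreeMagma.of x, r)
  | FreeMagma.mul p q, l =>
    (parse p l).bind fun a => (parse q a.2).map fun b => (a.1 * b.1, b.2)

lemma parse_complete (m : FreeMagma X) (r : List X) :
    parse (FreeMagma.map (fun _ : X => PUnit.unit) m)
      (toL (FreeMagma.lift FreeSemigroup.of m) ++ r) = some (m, r) := by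
  induction m generalizing r with
  | ih1 x => rfl
  | ih2 a b iha ihb =>
      show parse (FreeMagma.map _ a * FreeMagma.map _ b)
        (toL (FreeMagma.lift FreeSemigroup.of a * FreeMagma.lift FreeSemigroup.of b) ++ r)
          = _
      rw [toL_mul, List.append_assoc]
      show (parse _ _).bind _ = _
      rw [iha]
      simp [parse, ihb]

lemma parse_sound : ∀ (p : FreeMagma PUnit) (l : List X) (m : FreeMagma X) (r : List X),
    parse p l = some (m, r) →
      FreeMagma.map (fun _ : X => PUnit.unit) m = p ∧
        toL (FreeMagma.lift FreeSemigroup.of m) ++ r = l := by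
  intro p
  induction p with
  | ih1 u =>
      intro l m r h
      cases l with
      | nil => simp [parse] at h
      | cons x t =>
          simp [parse] at h
          obtain ⟨h1, h2⟩ := h
          subst h1; subst h2
          exact ⟨rfl, rfl⟩
  | ih2 a b iha ihb =>
      intro l m r h
      simp only [parse, Option.bind_eq_some_iff, Option.map_eq_some_iff] at h
      obtain ⟨⟨m1, r1⟩, h1, ⟨m2, r2⟩, h2, h3⟩ := h
      obtain ⟨ha1, ha2⟩ := iha l m1 r1 h1
      obtain ⟨hb1, hb2⟩ := ihb r1 m2 r2 h2
      cases h3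
      refine ⟨by rw [map_mul, ha1, hb1], ?_⟩
      rw [map_mul, toL_mul, List.append_assoc, hb2, ha2]

lemma lift_map_comm (m : FreeMagma X) :
    FreeMagma.lift FreeSemigroup.of (FreeMagma.map (fun _ : X => PUnit.unit) m) =
      FreeSemigroup.map (fun _ : X => PUnit.unit)
        (FreeMagma.lift FreeSemigroup.of m) := by
  induction m with
  | ih1 x => simp
  | ih2 a b iha ihb => simp [map_mul, iha, ihb]

lemma parse_exists : ∀ (p : FreeMagma PUnit) (l : List X),
    (toL (FreeMagma.lift FreeSemigroup.of p)).length ≤ l.length →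
      ∃ m r, parse p l = some (m, r) := by
  intro p
  induction p with
  | ih1 u =>
      intro l hl
      cases l with
      | nil => simp [toL] at hl
      | cons x t => exact ⟨FreeMagma.of x, t, rfl⟩
  | ih2 a b iha ihb =>
      intro l hl
      rw [map_mul, toL_mul, List.length_append] at hl
      obtain ⟨m1, r1, h1⟩ := iha l (le_trans (Nat.le_add_right _ _) hl)
      obtain ⟨ha1, ha2⟩ := parse_sound a l m1 r1 h1
      have hlen : (toL (FreeMagma.lift FreeSemigroup.of m1)).length =
          (toL (FreeMagma.lift FreeSemigroup.of a)).length := by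
        rw [← ha1, lift_map_comm, toL_map, List.length_map]
      have hr1 : (toL (FreeMagma.lift FreeSemigroup.of b)).length ≤ r1.length := by
        have := congrArg List.length ha2
        rw [List.length_append, hlen] at this
        omega
      obtain ⟨m2, r2, h2⟩ := ihb r1 hr1
      exact ⟨m1 * m2, r2, by simp [parse, h1, h2]⟩

end FMFP

/-- Section 4.1: the free magma on `X` is the fibered product of the free
semigroup on `X` and the free magma on one generator over the free semigroup on
one generator.  Here `w = FreeMagma.lift FreeSemigroup.of` records the underlying
word of a parenthesized word, `P = FreeMagma.map (fun _ => PUnit.unit)` its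
parenthesization, and the square with `FreeSemigroup.map (fun _ => PUnit.unit)`
and `w₀ = FreeMagma.lift FreeSemigroup.of : FreeMagma PUnit → FreeSemigroup PUnit`
is Cartesian. -/
theorem freeMagma_fibered_product (X : Type*) (s : FreeSemigroup X)
    (p : FreeMagma PUnit)
    (h : FreeSemigroup.map (fun _ : X => PUnit.unit) s =
      FreeMagma.lift FreeSemigroup.of p) :
    ∃! m : FreeMagma X,
      FreeMagma.lift FreeSemigroup.of m = s ∧
        FreeMagma.map (fun _ : X => PUnit.unit) m = p := by
  have hlen : (FMFP.toL (FreeMagma.lift FreeSemigroup.of p)).length ≤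
      (FMFP.toL s).length := by
    rw [← h, FMFP.toL_map, List.length_map]
  obtain ⟨m, r, hm⟩ := FMFP.parse_exists p (FMFP.toL s) hlen
  obtain ⟨hP, hw⟩ := FMFP.parse_sound p _ m r hm
  have hr : r = [] := by
    have h1 := congrArg List.length hw
    rw [List.length_append] at h1
    have h2 : (FMFP.toL (FreeMagma.lift FreeSemigroup.of m)).length =
        (FMFP.toL s).length := by
      have e1 : FreeMagma.lift FreeSemigroup.of p =
          FreeSemigroup.map (fun _ : X => PUnit.unit)
            (FreeMagma.lift FreeSemigroup.of m) := by
        rw [← hP, FMFP.lift_map_comm]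
      have e2 := congrArg (fun t => (FMFP.toL t).length) (h.trans e1)
      simpa [FMFP.toL_map] using e2.symm
    cases r with
    | nil => rfl
    | cons x t => simp at h1; omega
  subst hr
  rw [List.append_nil] at hw
  refine ⟨m, ⟨FMFP.toL_inj hw, hP⟩, ?_⟩
  rintro m' ⟨hw', hP'⟩
  have := FMFP.parse_complete m' ([] : List X)
  rw [hw', hP', List.append_nil] at this
  rw [this] at hm
  injection hm with hm'
  exact (Prod.ext_iff.mp hm').1
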